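/- arXiv:math/0702024 — 3 statements merged into one kernel-verified Lean document; each statement's English description precedes it below -/
import Mathlib

section
/- (Theorem 4.2, part 1: viscous boundary-layer set for the cubic flux.) Let f(u) = (u³ − 3u)/2 and for u_B ∈ ℝ define E^layer(u_B) = { v_∞ ∈ ℝ : there exists a differentiable v : [0,∞) → ℝ with v(0) = u_B, v'(y) = f(v(y)) − f(v_∞) for all y ≥ 0, and v(y) → v_∞ as y → ∞ }. When the equation f(u) = f(u_B), u ≠ u_B, has exactly two solutions, denote by u_B^s < u_B^ℓ the smaller and larger of them. Then: E^layer(u_B) = {u_B} if u_B < −2; E^layer(−2) = {−2}; E^layer(u_B) = ( [u_B^s, 1] ∪ {u_B} ) \ {u_B^s} if −2 < u_B < −1; E^layer(u_B) = [−1, 1] if −1 ≤ u_B ≤ 1; E^layer(u_B) = ( [−1, u_B^ℓ] ∪ {u_B} ) \ {u_B^ℓ} if 1 < u_B < 2; E^layer(2) = {2}; and E^layer(u_B) = {u_B} if u_B > 2. -/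
open Filter Set Topology MeasureTheory intervalIntegral

/-- The cubic flux `f(u) = (u³ − 3u)/2`. -/
noncomputable def cubicFlux : ℝ → ℝ := fun u => (u ^ 3 - 3 * u) / 2

/-- The set of admissible boundary values based on the boundary layer equation
of the vanishing viscosity method for the cubic flux: `v_∞` is admissible iff
the problem `v' = f(v) − f(v_∞)`, `v(0) = u_B`, `v(∞) = v_∞` has a solution. -/
noncomputable def cubicLayerSet (uB : ℝ) : Set ℝ :=
  { vinf : ℝ | ∃ v : ℝ → ℝ, v 0 = uB ∧
      (∀ y : ℝ, 0 ≤ y → HasDerivAt v (cubicFlux (v y) - cubicFlux vinf) y) ∧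
      Tendsto v atTop (nhds vinf) }

lemma flux_sub (x w : ℝ) :
    cubicFlux x - cubicFlux w = (x - w) * (x ^ 2 + x * w + w ^ 2 - 3) / 2 := by
  simp only [cubicFlux]; ring

lemma cubicFlux_cont : Continuous cubicFlux := by
  unfold cubicFlux; continuity

/-- If `v' = g(v)`, `v 0 < c` and `g c < 0`, then `v` stays below `c`. -/
lemma no_cross_up {g v : ℝ → ℝ} {c : ℝ}
    (hv : ∀ y : ℝ, 0 ≤ y → HasDerivAt v (g (v y)) y)
    (h0 : v 0 < c) (hc : g c < 0) : ∀ y : ℝ, 0 ≤ y → v y < c := by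
  by_contra hcon
  push_neg at hcon
  obtain ⟨y₀, hy₀, hvy₀⟩ := hcon
  have hvcont : ContinuousOn v (Ici 0) := fun y hy =>
    ((hv y hy).continuousAt).continuousWithinAt
  set S : Set ℝ := Ici (0:ℝ) ∩ v ⁻¹' (Ici c) with hSdef
  have hSclosed : IsClosed S :=
    hvcont.preimage_isClosed_of_isClosed isClosed_Ici isClosed_Ici
  have hne : S.Nonempty := ⟨y₀, hy₀, hvy₀⟩
  have hbdd : BddBelow S := ⟨0, fun x hx => hx.1⟩
  set y₁ := sInf S with hy₁def
  have hy₁S : y₁ ∈ S := hSclosed.csInf_mem hne hbdd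
  have h0y₁ : (0:ℝ) ≤ y₁ := hy₁S.1
  have hcv : c ≤ v y₁ := hy₁S.2
  have hlt : ∀ y, 0 ≤ y → y < y₁ → v y < c := by
    intro y hy hlty
    by_contra h
    push_neg at h
    exact absurd (csInf_le hbdd ⟨hy, h⟩) (not_le.2 hlty)
  have y₁pos : 0 < y₁ := by
    rcases h0y₁.lt_or_eq with h | h
    · exact h
    · exfalso; rw [← h] at hcv; linarith
  have hIoo : Ioo (0:ℝ) y₁ ∈ 𝓝[<] y₁ := by
    rw [mem_nhdsWithin]
    exact ⟨Ioi 0, isOpen_Ioi, y₁pos, fun x hx => ⟨hx.1, hx.2⟩⟩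
  have hvy₁ : v y₁ = c := by
    have htv : Tendsto v (𝓝[<] y₁) (𝓝 (v y₁)) :=
      ((hv y₁ h0y₁).continuousAt).continuousWithinAt
    refine le_antisymm ?_ hcv
    refine le_of_tendsto htv ?_
    filter_upwards [hIoo] with y hy
    exact (hlt y hy.1.le hy.2).le
  have hd : HasDerivAt v (g c) y₁ := by
    have := hv y₁ h0y₁; rwa [hvy₁] at this
  have hslope : Tendsto (slope v y₁) (𝓝[<] y₁) (𝓝 (g c)) :=
    (hasDerivAt_iff_tendsto_slope.1 hd).mono_left
      (nhdsWithin_mono _ (fun x hx => ne_of_lt hx))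
  have hge : 0 ≤ g c := by
    refine ge_of_tendsto hslope ?_
    filter_upwards [hIoo] with y hy
    have h1 : v y - v y₁ < 0 := by
      have := hlt y hy.1.le hy.2; rw [hvy₁]; linarith
    have h2 : y - y₁ < 0 := by linarith [hy.2]
    rw [slope_def_field]
    exact div_nonneg_of_nonpos h1.le h2.le
  linarith

lemma no_cross_down {g v : ℝ → ℝ} {c : ℝ}
    (hv : ∀ y : ℝ, 0 ≤ y → HasDerivAt v (g (v y)) y)
    (h0 : c < v 0) (hc : 0 < g c) : ∀ y : ℝ, 0 ≤ y → c < v y := by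
  have hv' : ∀ y : ℝ, 0 ≤ y → HasDerivAt (fun z => -(v z)) ((fun x => -(g (-x))) (-(v y))) y := by
    intro y hy
    exact (hv y hy).neg.congr_deriv (by simp)
  have := no_cross_up (g := fun x => -(g (-x))) (v := fun z => -(v z)) (c := -c)
    hv' (by simpa using h0) (by simpa using hc)
  intro y hy
  have h2 : -v y < -c := this y hy
  linarith

/-- A solution starting at an equilibrium stays there. -/
lemma stuck {w c : ℝ} {v : ℝ → ℝ}
    (hv : ∀ y : ℝ, 0 ≤ y → HasDerivAt v (cubicFlux (v y) - cubicFlux w) y)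
    (h0 : v 0 = c) (hc : cubicFlux c - cubicFlux w = 0) :
    ∀ y : ℝ, 0 ≤ y → v y = c := by
  intro T hT
  have hvcont : ContinuousOn v (Icc 0 T) := fun y hy =>
    ((hv y hy.1).continuousAt).continuousWithinAt
  obtain ⟨C, hC⟩ := (isCompact_Icc.image_of_continuousOn hvcont).isBounded.subset_closedBall 0
  set R : ℝ := max C |c| with hRdef
  have hRc : |c| ≤ R := le_max_right _ _
  have hvR : ∀ y ∈ Icc (0:ℝ) T, v y ∈ Icc (-R) R := by
    intro y hy
    have : v y ∈ Metric.closedBall (0:ℝ) C := hC ⟨y, hy, rfl⟩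
    rw [Metric.mem_closedBall, Real.dist_eq, sub_zero] at this
    have h1 : |v y| ≤ R := le_trans this (le_max_left _ _)
    rw [abs_le] at h1
    exact ⟨h1.1, h1.2⟩
  have hR0 : (0:ℝ) ≤ R := le_trans (abs_nonneg c) hRc
  set K : NNReal := ⟨(3 * R ^ 2 + 3) / 2, by positivity⟩ with hKdef
  have hlip : ∀ t : ℝ, LipschitzOnWith K (fun x => cubicFlux x - cubicFlux w) (Icc (-R) R) := by
    intro t
    rw [lipschitzOnWith_iff_dist_le_mul]
    intro x hx y hy
    rw [Real.dist_eq, Real.dist_eq]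
    have hxy : (cubicFlux x - cubicFlux w) - (cubicFlux y - cubicFlux w)
        = (x - y) * ((x ^ 2 + x * y + y ^ 2 - 3) / 2) := by
      simp only [cubicFlux]; ring
    rw [hxy, abs_mul]
    have hK : (K : ℝ) = (3 * R ^ 2 + 3) / 2 := rfl
    rw [hK, mul_comm]
    have hb : |(x ^ 2 + x * y + y ^ 2 - 3) / 2| ≤ (3 * R ^ 2 + 3) / 2 := by
      rw [abs_le]
      obtain ⟨hx1, hx2⟩ := hx
      obtain ⟨hy1, hy2⟩ := hy
      constructor <;> nlinarith [sq_nonneg (x - y), sq_nonneg (x + y), sq_nonneg x, sq_nonneg y]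
    exact mul_le_mul_of_nonneg_right hb (abs_nonneg _)
  have := ODE_solution_unique_of_mem_Icc_right (v := fun _ x => cubicFlux x - cubicFlux w)
    (s := fun _ => Icc (-R) R) (fun t _ => hlip t) hvcont
    (fun t ht => (hv t ht.1).hasDerivWithinAt)
    (fun t ht => hvR t ⟨ht.1, ht.2.le⟩)
    (continuousOn_const) (g := fun _ => c)
    (fun t ht => by simpa [hc] using (hasDerivWithinAt_const t (Ici t) c))
    (fun t ht => by
      constructor <;> [linarith [abs_le.1 hRc |>.1]; linarith [abs_le.1 hRc |>.2]])
    h0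
  exact this ⟨hT, le_refl T⟩

/-- If there is a barrier `c` strictly between `v 0` and `vinf` with negative rhs,
the solution cannot converge to `vinf`. -/
lemma not_below {vinf c : ℝ} {v : ℝ → ℝ}
    (hv : ∀ y : ℝ, 0 ≤ y → HasDerivAt v (cubicFlux (v y) - cubicFlux vinf) y)
    (htd : Tendsto v atTop (nhds vinf))
    (h0c : v 0 < c) (hcv : c < vinf)
    (hc : cubicFlux c - cubicFlux vinf < 0) : False := by
  have hall := no_cross_up (g := fun x => cubicFlux x - cubicFlux vinf) hv h0c hc
  have hev : ∀ᶠ y in atTop, v y ∈ Ioi c := htd (Ioi_mem_nhds hcv)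
  obtain ⟨y, hy1, hy2⟩ := (hev.and (eventually_ge_atTop (0:ℝ))).exists
  exact absurd hy1 (not_lt.2 (hall y hy2).le)

lemma necessity_lt {uB vinf : ℝ} {v : ℝ → ℝ} (hlt : uB < vinf)
    (h0 : v 0 = uB)
    (hv : ∀ y : ℝ, 0 ≤ y → HasDerivAt v (cubicFlux (v y) - cubicFlux vinf) y)
    (htd : Tendsto v atTop (nhds vinf)) :
    vinf ^ 2 ≤ 1 ∧ uB ^ 2 + uB * vinf + vinf ^ 2 < 3 := by
  have h1 : vinf ^ 2 ≤ 1 := by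
    by_contra h1
    push_neg at h1
    -- q is positive near vinf
    have hqc : ContinuousAt (fun x : ℝ => x ^ 2 + x * vinf + vinf ^ 2 - 3) vinf := by fun_prop
    have hqpos : (0:ℝ) < vinf ^ 2 + vinf * vinf + vinf ^ 2 - 3 := by nlinarith
    have hev : ∀ᶠ x in nhds vinf, 0 < x ^ 2 + x * vinf + vinf ^ 2 - 3 :=
      hqc.eventually (eventually_gt_nhds hqpos)
    obtain ⟨δ, hδ, hδp⟩ := Metric.eventually_nhds_iff.1 hev
    set ε : ℝ := min δ (vinf - uB) with hεdef
    have hε : 0 < ε := lt_min hδ (by linarith)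
    set c : ℝ := vinf - ε / 2 with hcdef
    have hcu : uB < c := by
      have : ε ≤ vinf - uB := min_le_right _ _
      simp only [hcdef]; linarith
    have hcv : c < vinf := by simp only [hcdef]; linarith
    have hqcpos : 0 < c ^ 2 + c * vinf + vinf ^ 2 - 3 := by
      apply hδp
      rw [Real.dist_eq]
      have : ε ≤ δ := min_le_left _ _
      rw [abs_lt]; constructor <;> simp only [hcdef] <;> linarith
    have hflux : cubicFlux c - cubicFlux vinf < 0 := by
      rw [flux_sub]
      have h1 : c - vinf < 0 := by linarith
      exact div_neg_of_neg_of_pos (mul_neg_of_neg_of_pos h1 hqcpos) two_pos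
    exact not_below hv htd (by rw [h0]; exact hcu) hcv hflux
  refine ⟨h1, ?_⟩
  by_contra h2
  push_neg at h2
  set d : ℝ := Real.sqrt (12 - 3 * vinf ^ 2) with hddef
  have hdisc : (0:ℝ) ≤ 12 - 3 * vinf ^ 2 := by nlinarith
  have hd2 : d ^ 2 = 12 - 3 * vinf ^ 2 := Real.sq_sqrt hdisc
  have hd3 : (3:ℝ) ≤ d := by
    have h9 : Real.sqrt 9 = 3 := by
      rw [show (9:ℝ) = 3 ^ 2 by norm_num]; exact Real.sqrt_sq (by norm_num)
    have h' : Real.sqrt 9 ≤ d := Real.sqrt_le_sqrt (by nlinarith)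
    rwa [h9] at h'
  set a : ℝ := (-vinf - d) / 2 with hadef
  set b : ℝ := (-vinf + d) / 2 with hbdef
  have hfact : ∀ x : ℝ, x ^ 2 + x * vinf + vinf ^ 2 - 3 = (x - a) * (x - b) := by
    intro x
    simp only [hadef, hbdef]
    linear_combination ((1:ℝ)/4) * hd2
  have haltb : a < b := by simp only [hadef, hbdef]; linarith
  have hvab : (vinf - a) * (vinf - b) ≤ 0 := by rw [← hfact]; nlinarith
  have hav : a ≤ vinf := by nlinarith
  have hvb : vinf ≤ b := by nlinarith
  have huBab : (0:ℝ) ≤ (uB - a) * (uB - b) := by rw [← hfact]; linarith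
  have huBa : uB ≤ a := by nlinarith
  rcases huBa.lt_or_eq with hlt' | heq
  · set c : ℝ := (uB + a) / 2 with hcdef
    have hc1 : uB < c := by simp only [hcdef]; linarith
    have hc2 : c < a := by simp only [hcdef]; linarith
    have hcv : c < vinf := by linarith
    have hq : 0 < c ^ 2 + c * vinf + vinf ^ 2 - 3 := by
      rw [hfact]; nlinarith
    have hflux : cubicFlux c - cubicFlux vinf < 0 := by
      rw [flux_sub]
      exact div_neg_of_neg_of_pos
        (mul_neg_of_neg_of_pos (by linarith) hq) two_pos
    exact not_below hv htd (by rw [h0]; exact hc1) hcv hflux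
  · have hflux0 : cubicFlux uB - cubicFlux vinf = 0 := by
      rw [flux_sub, hfact, heq]; ring
    have hst := stuck (w := vinf) (c := uB) hv h0 hflux0
    have htd' : Tendsto v atTop (nhds uB) := by
      refine Tendsto.congr' ?_ tendsto_const_nhds
      filter_upwards [eventually_ge_atTop (0:ℝ)] with y hy
      exact (hst y hy).symm
    exact absurd (tendsto_nhds_unique htd htd') (by linarith)

set_option maxHeartbeats 1000000 in
lemma sufficiency_lt {uB vinf : ℝ} (hlt : uB < vinf) (h1 : vinf ^ 2 ≤ 1)
    (h2 : uB ^ 2 + uB * vinf + vinf ^ 2 < 3) : vinf ∈ cubicLayerSet uB := by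
  classical
  set d : ℝ := Real.sqrt (12 - 3 * vinf ^ 2) with hddef
  have hdisc : (0:ℝ) ≤ 12 - 3 * vinf ^ 2 := by nlinarith
  have hd2 : d ^ 2 = 12 - 3 * vinf ^ 2 := Real.sq_sqrt hdisc
  have hd3 : (3:ℝ) ≤ d := by
    have h9 : Real.sqrt 9 = 3 := by
      rw [show (9:ℝ) = 3 ^ 2 by norm_num]; exact Real.sqrt_sq (by norm_num)
    have h' : Real.sqrt 9 ≤ d := Real.sqrt_le_sqrt (by nlinarith)
    rwa [h9] at h'
  set a : ℝ := (-vinf - d) / 2 with hadef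
  set b : ℝ := (-vinf + d) / 2 with hbdef
  have hfact : ∀ x : ℝ, x ^ 2 + x * vinf + vinf ^ 2 - 3 = (x - a) * (x - b) := by
    intro x
    simp only [hadef, hbdef]
    linear_combination ((1:ℝ)/4) * hd2
  have haltb : a < b := by simp only [hadef, hbdef]; linarith
  have hvab : (vinf - a) * (vinf - b) ≤ 0 := by rw [← hfact]; nlinarith
  have hav : a ≤ vinf := by nlinarith
  have hvb : vinf ≤ b := by nlinarith
  have huBq : (uB - a) * (uB - b) < 0 := by rw [← hfact]; linarith
  have hauB : a < uB := by nlinarith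
  have huBb : uB < b := by nlinarith
  set G : ℝ → ℝ := fun x => cubicFlux x - cubicFlux vinf with hGdef
  have hGeq : ∀ x : ℝ, G x = (vinf - x) * ((x - a) * (b - x)) / 2 := by
    intro x
    simp only [hGdef]
    rw [flux_sub, hfact]; ring
  have hGpos : ∀ x, a < x → x < vinf → 0 < G x := by
    intro x hax hxv
    rw [hGeq]
    have h3 := mul_pos (sub_pos.2 hxv)
      (mul_pos (sub_pos.2 hax) (sub_pos.2 (lt_of_lt_of_le hxv hvb)))
    linarith
  have hGcont : Continuous G := cubicFlux_cont.sub continuous_const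
  have hGne : ∀ x ∈ Ioo a vinf, G x ≠ 0 := fun x hx => ne_of_gt (hGpos x hx.1 hx.2)
  have hGinv_cont : ContinuousOn (fun x => (G x)⁻¹) (Ioo a vinf) :=
    ContinuousOn.inv₀ hGcont.continuousOn hGne
  set F : ℝ → ℝ := fun t => ∫ x in uB..t, (G x)⁻¹ with hFdef
  have huBmem : uB ∈ Ioo a vinf := ⟨hauB, hlt⟩
  have hFd : ∀ t ∈ Ioo a vinf, HasDerivAt F (G t)⁻¹ t := by
    intro t ht
    have hsub : uIcc uB t ⊆ Ioo a vinf := (Set.ordConnected_Ioo).uIcc_subset huBmem ht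
    exact intervalIntegral.integral_hasDerivAt_right
      ((hGinv_cont.mono hsub).intervalIntegrable)
      (hGinv_cont.stronglyMeasurableAtFilter isOpen_Ioo t ht)
      (hGcont.continuousAt.inv₀ (hGne t ht))
  have hFcont : ContinuousOn F (Ioo a vinf) := fun t ht =>
    (hFd t ht).continuousAt.continuousWithinAt
  have hFmono : StrictMonoOn F (Ioo a vinf) := by
    apply strictMonoOn_of_deriv_pos (convex_Ioo a vinf) hFcont
    intro t ht
    rw [interior_Ioo] at ht
    rw [(hFd t ht).deriv]
    exact inv_pos.2 (hGpos t ht.1 ht.2)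
  have hF0 : F uB = 0 := intervalIntegral.integral_same
  have hGle : ∀ x, uB ≤ x → x < vinf → G x ≤ 3 / 2 * (vinf - x) := by
    intro x hx1 hx2
    have heq2 : G x = (vinf - x) * ((3 - (x ^ 2 + x * vinf + vinf ^ 2)) / 2) := by
      simp only [hGdef]; rw [flux_sub]; ring
    rw [heq2]
    have h3 : 0 ≤ x ^ 2 + x * vinf + vinf ^ 2 := by
      nlinarith [sq_nonneg (2 * x + vinf), sq_nonneg vinf]
    nlinarith [sub_pos.2 hx2]
  have hIbound : ∀ t, uB ≤ t → t < vinf →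
      2 / 3 * (Real.log (vinf - uB) - Real.log (vinf - t)) ≤ F t := by
    intro t ht1 ht2
    have hsubI : Icc uB t ⊆ Ioo a vinf := fun x hx =>
      ⟨lt_of_lt_of_le hauB hx.1, lt_of_le_of_lt hx.2 ht2⟩
    have hint1 : IntervalIntegrable (fun x => (G x)⁻¹) volume uB t := by
      apply (hGinv_cont.mono ?_).intervalIntegrable
      rw [uIcc_of_le ht1]; exact hsubI
    have hcont2 : ContinuousOn (fun x : ℝ => 2 / 3 * (vinf - x)⁻¹) (Icc uB t) := by
      apply ContinuousOn.mul continuousOn_const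
      apply ContinuousOn.inv₀ (by fun_prop)
      intro x hx
      have := lt_of_le_of_lt hx.2 ht2
      exact ne_of_gt (by linarith)
    have hint2 : IntervalIntegrable (fun x : ℝ => 2 / 3 * (vinf - x)⁻¹) volume uB t := by
      apply ContinuousOn.intervalIntegrable; rwa [uIcc_of_le ht1]
    have hptwise : ∀ x ∈ Icc uB t, 2 / 3 * (vinf - x)⁻¹ ≤ (G x)⁻¹ := by
      intro x hx
      have hxIoo := hsubI hx
      have hGx := hGpos x hxIoo.1 hxIoo.2
      have hle := hGle x hx.1 hxIoo.2
      have h4 : (3 / 2 * (vinf - x))⁻¹ ≤ (G x)⁻¹ := inv_anti₀ hGx hle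
      calc 2 / 3 * (vinf - x)⁻¹ = (3 / 2 * (vinf - x))⁻¹ := by
            rw [mul_inv]; norm_num
        _ ≤ (G x)⁻¹ := h4
    have hmono := intervalIntegral.integral_mono_on ht1 hint2 hint1 hptwise
    have hcalc : (∫ x in uB..t, 2 / 3 * (vinf - x)⁻¹) =
        (-(2/3) * Real.log (vinf - t)) - (-(2/3) * Real.log (vinf - uB)) := by
      apply intervalIntegral.integral_eq_sub_of_hasDerivAt
      · intro x hx
        rw [uIcc_of_le ht1] at hx
        have hxv : 0 < vinf - x := by
          have := lt_of_le_of_lt hx.2 ht2; linarith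
        have hder : HasDerivAt (fun y : ℝ => vinf - y) (-1) x :=
          (hasDerivAt_id x).const_sub vinf
        have hlog := (Real.hasDerivAt_log (ne_of_gt hxv)).comp x hder
        have hfinal := hlog.const_mul (-(2/3) : ℝ)
        refine hfinal.congr_deriv ?_
        ring
      · exact hint2
    have : 2 / 3 * (Real.log (vinf - uB) - Real.log (vinf - t)) =
        (-(2/3) * Real.log (vinf - t)) - (-(2/3) * Real.log (vinf - uB)) := by ring
    rw [this, ← hcalc]
    exact hmono
  have hFbig : ∀ M : ℝ, ∃ t, t ∈ Ioo uB vinf ∧ M ≤ F t := by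
    intro M
    set ε : ℝ := min ((vinf - uB)/2) (Real.exp (Real.log (vinf - uB) - 3/2 * M)) with hεdef
    have hε0 : 0 < ε := lt_min (by linarith) (Real.exp_pos _)
    have hε1 : ε ≤ (vinf - uB)/2 := min_le_left _ _
    refine ⟨vinf - ε, ⟨by linarith, by linarith⟩, ?_⟩
    have hlogε : Real.log ε ≤ Real.log (vinf - uB) - 3/2 * M := by
      have := (Real.log_le_log_iff hε0 (Real.exp_pos _)).2 (min_le_right
        ((vinf - uB)/2) (Real.exp (Real.log (vinf - uB) - 3/2 * M)))
      rwa [Real.log_exp] at this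
    have hIb := hIbound (vinf - ε) (by linarith) (by linarith)
    have heps : vinf - (vinf - ε) = ε := by ring
    rw [heps] at hIb
    linarith
  set t₀ : ℝ := (a + uB)/2 with ht₀def
  have ht₀mem : t₀ ∈ Ioo a vinf := ⟨by simp only [ht₀def]; linarith,
    by simp only [ht₀def]; linarith⟩
  have ht₀uB : t₀ < uB := by simp only [ht₀def]; linarith
  have hFt₀ : F t₀ < 0 := by
    have := hFmono ht₀mem huBmem ht₀uB
    rwa [hF0] at this
  have hIcoSub : Ico t₀ vinf ⊆ Ioo a vinf := fun x hx =>
    ⟨lt_of_lt_of_le ht₀mem.1 hx.1, hx.2⟩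
  have hex : ∀ y : ℝ, F t₀ ≤ y → ∃ x, x ∈ Ico t₀ vinf ∧ F x = y := by
    intro y hy
    obtain ⟨t, htmem, htM⟩ := hFbig y
    have ht₀t : t₀ ≤ t := by linarith [htmem.1]
    have hsubtt : Icc t₀ t ⊆ Ioo a vinf := fun x hx =>
      ⟨lt_of_lt_of_le ht₀mem.1 hx.1, lt_of_le_of_lt hx.2 htmem.2⟩
    obtain ⟨x, hxmem, hxval⟩ := intermediate_value_Icc ht₀t (hFcont.mono hsubtt) ⟨hy, htM⟩
    exact ⟨x, ⟨hxmem.1, lt_of_le_of_lt hxmem.2 htmem.2⟩, hxval⟩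
  set vsol : ℝ → ℝ :=
    fun y => if h : ∃ x, x ∈ Ico t₀ vinf ∧ F x = y then h.choose else uB with hvsoldef
  have hspec : ∀ y : ℝ, F t₀ ≤ y → vsol y ∈ Ico t₀ vinf ∧ F (vsol y) = y := by
    intro y hy
    have h := hex y hy
    simp only [hvsoldef, dif_pos h]
    exact h.choose_spec
  have hInj := hFmono.injOn
  have hv0 : vsol 0 = uB := by
    have h := hspec 0 hFt₀.le
    exact hInj (hIcoSub h.1) huBmem (by rw [h.2, hF0])
  have hvcont : ∀ y₁ : ℝ, F t₀ < y₁ → ContinuousAt vsol y₁ := by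
    intro y₁ hy₁
    obtain ⟨hx₁mem, hx₁val⟩ := hspec y₁ hy₁.le
    set x₁ := vsol y₁ with hx₁def
    have hx₁Ioo : x₁ ∈ Ioo a vinf := hIcoSub hx₁mem
    have ht₀x₁ : t₀ < x₁ := by
      rcases (hx₁mem.1).lt_or_eq with h | h
      · exact h
      · exfalso; rw [← h] at hx₁val; linarith [hx₁val ▸ hy₁]
    rw [Metric.continuousAt_iff]
    intro ε hε
    set xm : ℝ := max ((t₀ + x₁)/2) (x₁ - ε/2) with hxmdef
    have hxm1 : t₀ < xm := lt_of_lt_of_le (by linarith) (le_max_left _ _)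
    have hxm2 : xm < x₁ := max_lt (by linarith) (by linarith)
    have hxm3 : x₁ - xm ≤ ε/2 := by
      have := le_max_right ((t₀ + x₁)/2) (x₁ - ε/2); linarith
    have hxmIoo : xm ∈ Ioo a vinf := ⟨lt_trans ht₀mem.1 hxm1, lt_trans hxm2 hx₁Ioo.2⟩
    set xp : ℝ := min ((x₁ + vinf)/2) (x₁ + ε/2) with hxpdef
    have hxp1 : x₁ < xp := lt_min (by linarith [hx₁Ioo.2]) (by linarith)
    have hxp2 : xp < vinf := lt_of_le_of_lt (min_le_left _ _) (by linarith [hx₁Ioo.2])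
    have hxp3 : xp - x₁ ≤ ε/2 := by
      have := min_le_right ((x₁ + vinf)/2) (x₁ + ε/2); linarith
    have hxpIoo : xp ∈ Ioo a vinf := ⟨lt_trans hx₁Ioo.1 hxp1, hxp2⟩
    have hFxm : F xm < y₁ := by rw [← hx₁val]; exact hFmono hxmIoo hx₁Ioo hxm2
    have hFxp : y₁ < F xp := by rw [← hx₁val]; exact hFmono hx₁Ioo hxpIoo hxp1
    refine ⟨min (y₁ - F xm) (F xp - y₁), lt_min (by linarith) (by linarith), ?_⟩
    intro y hy
    rw [Real.dist_eq] at hy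
    have habs := abs_lt.1 hy
    have hmin1 := min_le_left (y₁ - F xm) (F xp - y₁)
    have hmin2 := min_le_right (y₁ - F xm) (F xp - y₁)
    have hy1 : F xm < y := by linarith [habs.1]
    have hy2 : y < F xp := by linarith [habs.2]
    have hFt₀xm : F t₀ < F xm := hFmono ht₀mem hxmIoo hxm1
    obtain ⟨hymem, hyval⟩ := hspec y (by linarith)
    have h1 : xm < vsol y :=
      (hFmono.lt_iff_lt hxmIoo (hIcoSub hymem)).1 (by rw [hyval]; exact hy1)
    have h2 : vsol y < xp :=
      (hFmono.lt_iff_lt (hIcoSub hymem) hxpIoo).1 (by rw [hyval]; exact hy2)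
    rw [Real.dist_eq, abs_lt]
    constructor <;> linarith
  have hderiv : ∀ y : ℝ, 0 ≤ y → HasDerivAt vsol (G (vsol y)) y := by
    intro y hy0
    have hy : F t₀ < y := lt_of_lt_of_le hFt₀ hy0
    obtain ⟨hymem, hyval⟩ := hspec y hy.le
    have hyIoo := hIcoSub hymem
    have hFd' : HasDerivAt F (G (vsol y))⁻¹ (vsol y) := hFd _ hyIoo
    have hne : (G (vsol y))⁻¹ ≠ 0 := inv_ne_zero (ne_of_gt (hGpos _ hyIoo.1 hyIoo.2))
    have hev : ∀ᶠ z in nhds y, F (vsol z) = z := by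
      filter_upwards [Ioi_mem_nhds hy] with z hz
      exact (hspec z hz.le).2
    have hfin := HasDerivAt.of_local_left_inverse (hvcont y hy) hFd' hne hev
    rwa [inv_inv] at hfin
  have htend : Tendsto vsol atTop (nhds vinf) := by
    rw [tendsto_order]
    constructor
    · intro c hc
      set c' : ℝ := max c uB with hc'def
      have hc'mem : c' ∈ Ioo a vinf := ⟨lt_of_lt_of_le hauB (le_max_right _ _), max_lt hc hlt⟩
      filter_upwards [eventually_gt_atTop (F c')] with y hy
      have hyt₀ : F t₀ < y :=
        lt_trans (hFmono ht₀mem hc'mem (lt_of_lt_of_le ht₀uB (le_max_right _ _))) hy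
      obtain ⟨hymem, hyval⟩ := hspec y hyt₀.le
      have := (hFmono.lt_iff_lt hc'mem (hIcoSub hymem)).1 (by rw [hyval]; exact hy)
      exact lt_of_le_of_lt (le_max_left c uB) this
    · intro c hc
      filter_upwards [eventually_ge_atTop (F t₀)] with y hy
      exact lt_trans (hspec y hy).1.2 hc
  exact ⟨vsol, hv0, hderiv, htend⟩

lemma layer_neg {uB vinf : ℝ} (h : vinf ∈ cubicLayerSet uB) :
    -vinf ∈ cubicLayerSet (-uB) := by
  obtain ⟨v, h0, hd, ht⟩ := h
  refine ⟨fun y => -(v y), by simp [h0], fun y hy => ?_, ht.neg⟩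
  have hneg := (hd y hy).neg
  refine hneg.congr_deriv ?_
  simp only [cubicFlux]
  ring

lemma self_mem_layer (uB : ℝ) : uB ∈ cubicLayerSet uB :=
  ⟨fun _ => uB, rfl, fun y _ => by
    simpa [sub_self] using hasDerivAt_const y uB, tendsto_const_nhds⟩

lemma mem_layer_iff (uB vinf : ℝ) :
    vinf ∈ cubicLayerSet uB ↔
      vinf = uB ∨ (vinf ^ 2 ≤ 1 ∧ uB ^ 2 + uB * vinf + vinf ^ 2 < 3) := by
  constructor
  · intro h
    rcases eq_or_ne vinf uB with he | hne
    · exact Or.inl he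
    right
    rcases lt_or_gt_of_ne hne with hltv | hltv
    · -- vinf < uB : use symmetry
      obtain ⟨v, h0, hd, ht⟩ := layer_neg h
      have := necessity_lt (by linarith : -uB < -vinf) h0 hd ht
      constructor
      · nlinarith [this.1]
      · nlinarith [this.2]
    · obtain ⟨v, h0, hd, ht⟩ := h
      exact necessity_lt hltv h0 hd ht
  · rintro (rfl | ⟨hc1, hc2⟩)
    · exact self_mem_layer _
    rcases lt_trichotomy uB vinf with h | h | h
    · exact sufficiency_lt h hc1 hc2
    · rw [← h]; exact self_mem_layer _
    · have hs := sufficiency_lt (show -uB < -vinf by linarith)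
        (by nlinarith) (by nlinarith)
      have := layer_neg hs
      simpa using this

lemma quad_of_flux {u uB : ℝ} (hne : u ≠ uB) (heq : cubicFlux u = cubicFlux uB) :
    u ^ 2 + u * uB + uB ^ 2 = 3 := by
  have h := flux_sub u uB
  rw [heq, sub_self] at h
  have h2 : (u - uB) * (u ^ 2 + u * uB + uB ^ 2 - 3) = 0 := by linarith
  rcases mul_eq_zero.1 h2 with h3 | h3
  · exact absurd (by linarith : u = uB) hne
  · linarith

lemma between_of_mul_neg {p q z : ℝ} (hpq : p < q) (h : (z - p) * (z - q) < 0) :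
    p < z ∧ z < q := by
  constructor
  · by_contra hc; push_neg at hc; nlinarith
  · by_contra hc; push_neg at hc; nlinarith

lemma outside_of_mul_pos {p q z : ℝ} (hpq : p < q) (h : 0 < (z - p) * (z - q)) :
    z < p ∨ q < z := by
  rcases lt_or_ge z p with h1 | h1
  · exact Or.inl h1
  · rcases le_or_gt z q with h2 | h2
    · nlinarith
    · exact Or.inr h2

set_option maxHeartbeats 1000000 in
/-- Theorem 4.2, part 1, viscous boundary-layer set for the cubic
flux `f(u) = (u³−3u)/2`. Here, whenever the equation `f(u) = f(u_B)`,
`u ≠ u_B`, has exactly two solutions, `u_B^s < u_B^ℓ` denote the smaller and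
larger one. -/
theorem cubicLayerSet_eq (uB : ℝ) :
    (uB < -2 → cubicLayerSet uB = {uB}) ∧
    (uB = -2 → cubicLayerSet uB = {-2}) ∧
    (-2 < uB → uB < -1 → ∀ uBs uBl : ℝ, uBs < uBl →
      uBs ≠ uB → cubicFlux uBs = cubicFlux uB →
      uBl ≠ uB → cubicFlux uBl = cubicFlux uB →
      (∀ u : ℝ, u ≠ uB → cubicFlux u = cubicFlux uB → u = uBs ∨ u = uBl) →
      cubicLayerSet uB = (Set.Icc uBs 1 ∪ {uB}) \ {uBs}) ∧
    (-1 ≤ uB → uB ≤ 1 → cubicLayerSet uB = Set.Icc (-1) 1) ∧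
    (1 < uB → uB < 2 → ∀ uBs uBl : ℝ, uBs < uBl →
      uBs ≠ uB → cubicFlux uBs = cubicFlux uB →
      uBl ≠ uB → cubicFlux uBl = cubicFlux uB →
      (∀ u : ℝ, u ≠ uB → cubicFlux u = cubicFlux uB → u = uBs ∨ u = uBl) →
      cubicLayerSet uB = (Set.Icc (-1) uBl ∪ {uB}) \ {uBl}) ∧
    (uB = 2 → cubicLayerSet uB = {2}) ∧
    (2 < uB → cubicLayerSet uB = {uB}) := by
  refine ⟨?_, ?_, ?_, ?_, ?_, ?_, ?_⟩
  · -- uB < -2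
    intro h
    ext z
    simp only [mem_layer_iff, Set.mem_singleton_iff, Set.mem_setOf_eq]
    constructor
    · rintro (rfl | ⟨h1, h2⟩)
      · rfl
      · exfalso; nlinarith [sq_nonneg (z + uB/2), sq_nonneg (uB + 2)]
    · rintro rfl; exact Or.inl rfl
  · -- uB = -2
    rintro rfl
    ext z
    simp only [mem_layer_iff, Set.mem_singleton_iff, Set.mem_setOf_eq]
    constructor
    · rintro (rfl | ⟨h1, h2⟩)
      · rfl
      · exfalso; nlinarith [sq_nonneg (z - 1)]
    · rintro rfl; exact Or.inl rfl
  · -- -2 < uB < -1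
    intro hm2 hm1 uBs uBl hso hsne hseq hlne hleq _
    have hq_s : uBs ^ 2 + uBs * uB + uB ^ 2 = 3 := quad_of_flux hsne hseq
    have hq_l : uBl ^ 2 + uBl * uB + uB ^ 2 = 3 := quad_of_flux hlne hleq
    have hsum0 : (uBs - uBl) * (uBs + uBl + uB) = 0 := by linear_combination hq_s - hq_l
    have hsum : uBs + uBl = -uB := by
      rcases mul_eq_zero.1 hsum0 with h | h
      · exact absurd (by linarith : uBs = uBl) (ne_of_lt hso)
      · linarith
    have hprod : uBs * uBl = uB ^ 2 - 3 := by linear_combination uBs * hsum - hq_s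
    have key : ∀ z : ℝ, uB ^ 2 + uB * z + z ^ 2 - 3 = (z - uBs) * (z - uBl) := by
      intro z; linear_combination z * hsum - hprod
    have h3 : 0 < (uB - uBs) * (uB - uBl) := by nlinarith [key uB, sq_nonneg (uB + 1)]
    have huBlt : uB < uBs := by
      rcases outside_of_mul_pos hso h3 with h | h
      · exact h
      · linarith
    have h6 : (1 - uBs) * (1 - uBl) < 0 := by nlinarith [key 1]
    obtain ⟨hs1, hl1⟩ := between_of_mul_neg hso h6
    have h7 : 0 < (-1 - uBs) * (-1 - uBl) := by nlinarith [key (-1)]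
    have hsm1 : -1 < uBs := by
      rcases outside_of_mul_pos hso h7 with h | h
      · linarith
      · linarith
    ext z
    simp only [mem_layer_iff, Set.mem_diff, Set.mem_union, Set.mem_Icc,
      Set.mem_singleton_iff, Set.mem_setOf_eq]
    constructor
    · rintro (rfl | ⟨h1', h2'⟩)
      · exact ⟨Or.inr rfl, ne_of_lt huBlt⟩
      · have hz : (z - uBs) * (z - uBl) < 0 := by linarith [key z]
        obtain ⟨hzs, hzl⟩ := between_of_mul_neg hso hz
        have hzle1 : z ≤ 1 := by nlinarith
        exact ⟨Or.inl ⟨hzs.le, hzle1⟩, ne_of_gt hzs⟩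
    · rintro ⟨(⟨hz1, hz2⟩ | rfl), hzne⟩
      · right
        have hzs : uBs < z := lt_of_le_of_ne hz1 (Ne.symm hzne)
        have hzsq : z ^ 2 ≤ 1 := by nlinarith
        refine ⟨hzsq, ?_⟩
        have : (z - uBs) * (z - uBl) < 0 :=
          mul_neg_of_pos_of_neg (by linarith) (by linarith)
        linarith [key z]
      · exact Or.inl rfl
  · -- -1 ≤ uB ≤ 1
    intro hm1 hp1
    ext z
    simp only [mem_layer_iff, Set.mem_Icc, Set.mem_setOf_eq]
    constructor
    · rintro (rfl | ⟨h1', h2'⟩)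
      · exact ⟨hm1, hp1⟩
      · constructor <;> nlinarith
    · rintro ⟨hz1, hz2⟩
      rcases eq_or_ne z uB with rfl | hne
      · exact Or.inl rfl
      · right
        have hC : 0 < (z - uB) ^ 2 := by
          have := sub_ne_zero.2 hne; positivity
        refine ⟨by nlinarith, by nlinarith⟩
  · -- 1 < uB < 2
    intro hp1 hp2 uBs uBl hso hsne hseq hlne hleq _
    have hq_s : uBs ^ 2 + uBs * uB + uB ^ 2 = 3 := quad_of_flux hsne hseq
    have hq_l : uBl ^ 2 + uBl * uB + uB ^ 2 = 3 := quad_of_flux hlne hleq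
    have hsum0 : (uBs - uBl) * (uBs + uBl + uB) = 0 := by linear_combination hq_s - hq_l
    have hsum : uBs + uBl = -uB := by
      rcases mul_eq_zero.1 hsum0 with h | h
      · exact absurd (by linarith : uBs = uBl) (ne_of_lt hso)
      · linarith
    have hprod : uBs * uBl = uB ^ 2 - 3 := by linear_combination uBs * hsum - hq_s
    have key : ∀ z : ℝ, uB ^ 2 + uB * z + z ^ 2 - 3 = (z - uBs) * (z - uBl) := by
      intro z; linear_combination z * hsum - hprod
    have h7 : (-1 - uBs) * (-1 - uBl) < 0 := by nlinarith [key (-1)]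
    obtain ⟨hsm1, hlm1⟩ := between_of_mul_neg hso h7
    have h6 : 0 < (1 - uBs) * (1 - uBl) := by nlinarith [key 1]
    have hl1 : uBl < 1 := by
      rcases outside_of_mul_pos hso h6 with h | h
      · linarith
      · linarith
    have huBgt : uBl < uB := by linarith
    ext z
    simp only [mem_layer_iff, Set.mem_diff, Set.mem_union, Set.mem_Icc,
      Set.mem_singleton_iff, Set.mem_setOf_eq]
    constructor
    · rintro (rfl | ⟨h1', h2'⟩)
      · exact ⟨Or.inr rfl, ne_of_gt huBgt⟩
      · have hz : (z - uBs) * (z - uBl) < 0 := by linarith [key z]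
        obtain ⟨hzs, hzl⟩ := between_of_mul_neg hso hz
        have hzm1 : -1 ≤ z := by nlinarith
        exact ⟨Or.inl ⟨hzm1, hzl.le⟩, ne_of_lt hzl⟩
    · rintro ⟨(⟨hz1, hz2⟩ | rfl), hzne⟩
      · right
        have hzl : z < uBl := lt_of_le_of_ne hz2 hzne
        have hzsq : z ^ 2 ≤ 1 := by nlinarith
        refine ⟨hzsq, ?_⟩
        have : (z - uBs) * (z - uBl) < 0 :=
          mul_neg_of_pos_of_neg (by linarith) (by linarith)
        linarith [key z]
      · exact Or.inl rfl
  · -- uB = 2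
    rintro rfl
    ext z
    simp only [mem_layer_iff, Set.mem_singleton_iff, Set.mem_setOf_eq]
    constructor
    · rintro (rfl | ⟨h1, h2⟩)
      · rfl
      · exfalso; nlinarith [sq_nonneg (z + 1)]
    · rintro rfl; exact Or.inl rfl
  · -- 2 < uB
    intro h
    ext z
    simp only [mem_layer_iff, Set.mem_singleton_iff, Set.mem_setOf_eq]
    constructor
    · rintro (rfl | ⟨h1, h2⟩)
      · rfl
      · exfalso; nlinarith [sq_nonneg (z + uB/2), sq_nonneg (uB - 2)]
    · rintro rfl; exact Or.inl rfl
end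

section
/- (Boundary-layer curve for nonlinear elastodynamics, equations (4.10)–(4.14).) Let σ : ℝ → ℝ be C¹ with σ'(v) > 0 for every v, and let v_∞, u_∞ ∈ ℝ. Suppose v, u : [0,∞) → ℝ are differentiable functions satisfying v'(y) = u_∞ − u(y) and u'(y) = σ(v_∞) − σ(v(y)) for all y ≥ 0, with v(y) → v_∞ and u(y) → u_∞ as y → ∞. Set v_B = v(0) and u_B = u(0). Then (u_B − u_∞)²/2 = ∫_{v_∞}^{v_B} ( σ(s) − σ(v_∞) ) ds; moreover v_B = v_∞ if and only if u_B = u_∞, and if v_B ≠ v_∞ then (u_∞ − u_B)(v_∞ − v_B) > 0, i.e. u_∞ = u_B + ( ∫_{v_∞}^{v_B} 2(σ(s) − σ(v_∞)) ds )^{1/2} when v_∞ > v_B and u_∞ = u_B − ( ∫_{v_∞}^{v_B} 2(σ(s) − σ(v_∞)) ds )^{1/2} when v_∞ < v_B. -/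
open Filter intervalIntegral

/-- boundary-layer curve for nonlinear elastodynamics,
equations (4.10)–(4.14): if `(v,u)` solves `v' = u_∞ − u`, `u' = σ(v_∞) − σ(v)`
on `[0,∞)` with `(v,u)(∞) = (v_∞, u_∞)` and `σ' > 0`, then, with
`v_B = v(0)`, `u_B = u(0)`:
`(u_B − u_∞)²/2 = ∫_{v_∞}^{v_B} (σ(s) − σ(v_∞)) ds`; `v_B = v_∞ ↔ u_B = u_∞`;
if `v_B ≠ v_∞` then `(u_∞ − u_B)(v_∞ − v_B) > 0`, i.e.
`u_∞ = u_B + (∫_{v_∞}^{v_B} 2(σ(s) − σ(v_∞)) ds)^{1/2}` when `v_∞ > v_B` and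
`u_∞ = u_B − (∫_{v_∞}^{v_B} 2(σ(s) − σ(v_∞)) ds)^{1/2}` when `v_∞ < v_B`. -/
theorem elastodynamics_boundary_layer_curve
    (σ : ℝ → ℝ) (hσ : ContDiff ℝ 1 σ) (hσ' : ∀ v, 0 < deriv σ v)
    (vinf uinf : ℝ) (v u : ℝ → ℝ)
    (hv : ∀ y : ℝ, 0 ≤ y → HasDerivAt v (uinf - u y) y)
    (hu : ∀ y : ℝ, 0 ≤ y → HasDerivAt u (σ vinf - σ (v y)) y)
    (hvlim : Tendsto v atTop (nhds vinf))
    (hulim : Tendsto u atTop (nhds uinf)) :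
    (u 0 - uinf) ^ 2 / 2 = ∫ s in vinf..(v 0), (σ s - σ vinf) ∧
    (v 0 = vinf ↔ u 0 = uinf) ∧
    (v 0 ≠ vinf → 0 < (uinf - u 0) * (vinf - v 0)) ∧
    (v 0 < vinf →
      uinf = u 0 + Real.sqrt (∫ s in vinf..(v 0), 2 * (σ s - σ vinf))) ∧
    (vinf < v 0 →
      uinf = u 0 - Real.sqrt (∫ s in vinf..(v 0), 2 * (σ s - σ vinf))) := by
  have hσmono : StrictMono σ := strictMono_of_deriv_pos hσ'
  set F : ℝ → ℝ := fun s => σ s - σ vinf with hF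
  have hFcont : Continuous F := (hσ.continuous).sub continuous_const
  set W : ℝ → ℝ := fun x => ∫ s in vinf..x, F s with hWdef
  -- FTC: W has derivative F x at every x
  have hW : ∀ x : ℝ, HasDerivAt W (F x) x := by
    intro x
    exact intervalIntegral.integral_hasDerivAt_right
      (hFcont.intervalIntegrable _ _)
      hFcont.aestronglyMeasurable.stronglyMeasurableAtFilter
      hFcont.continuousAt
  have hW0 : W vinf = 0 := intervalIntegral.integral_same
  -- W is positive away from vinf
  have hWpos : ∀ x : ℝ, x ≠ vinf → 0 < W x := by
    intro x hx
    rcases lt_or_gt_of_ne hx with h | h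
    · have hWx : W x = ∫ s in x..vinf, -F s := by
        rw [intervalIntegral.integral_neg, ← intervalIntegral.integral_symm]
      rw [hWx]
      apply intervalIntegral_pos_of_pos_on ((hFcont.neg).intervalIntegrable _ _) _ h
      intro s hs
      simp only [hF, Pi.neg_apply, neg_sub, sub_pos]
      exact hσmono hs.2
    · apply intervalIntegral_pos_of_pos_on (hFcont.intervalIntegrable _ _) _ h
      intro s hs
      simp only [hF, sub_pos]
      exact hσmono hs.1
  -- Energy E is constant on [0,∞)
  set E : ℝ → ℝ := fun y => (u y - uinf) ^ 2 / 2 - W (v y) with hEdef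
  have hE' : ∀ y : ℝ, 0 ≤ y → HasDerivAt E 0 y := by
    intro y hy
    have h1 : HasDerivAt (fun y => (u y - uinf) ^ 2 / 2)
        (((2 : ℕ) * (u y - uinf) ^ 1 * (σ vinf - σ (v y))) / 2) y :=
      (((hu y hy).sub_const _).pow 2).div_const 2
    have h2 : HasDerivAt (fun y => W (v y)) (F (v y) * (uinf - u y)) y :=
      (hW (v y)).comp y (hv y hy)
    have h3 := h1.sub h2
    convert h3 using 1
    · rfl
    · rfl
    · rfl
    simp only [hF]
    push_cast
    ring
  have hEconst : ∀ y : ℝ, 0 ≤ y → E y = E 0 := by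
    intro y hy
    have hc : ContinuousOn E (Set.Icc 0 y) := fun x hx =>
      ((hE' x hx.1).continuousAt).continuousWithinAt
    exact constant_of_has_deriv_right_zero hc
      (fun x hx => (hE' x hx.1).hasDerivWithinAt) y (Set.right_mem_Icc.2 hy)
  -- E tends to 0 at infinity, hence E 0 = 0
  have hWdiff : Differentiable ℝ W := fun x => (hW x).differentiableAt
  have hWcont : Continuous W := hWdiff.continuous
  have hElim : Tendsto E atTop (nhds 0) := by
    have h1 : Tendsto (fun y => (u y - uinf) ^ 2 / 2) atTop (nhds ((uinf - uinf) ^ 2 / 2)) :=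
      (((hulim.sub tendsto_const_nhds).pow 2).div_const 2)
    have h2 : Tendsto (fun y => W (v y)) atTop (nhds (W vinf)) :=
      (hWcont.continuousAt.tendsto).comp hvlim
    have := h1.sub h2
    simpa [hW0] using this
  have hE0 : E 0 = 0 := by
    have h1 : Tendsto E atTop (nhds (E 0)) := by
      apply Tendsto.congr' _ (tendsto_const_nhds (α := ℝ))
      filter_upwards [eventually_ge_atTop (0 : ℝ)] with y hy
      exact (hEconst y hy).symm
    exact tendsto_nhds_unique h1 hElim
  have key : (u 0 - uinf) ^ 2 / 2 = W (v 0) := by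
    have := hE0
    simp only [hEdef] at this
    linarith
  -- the monotone quantity φ
  set φ : ℝ → ℝ := fun y => (v y - vinf) * (u y - uinf) with hφdef
  have hφ' : ∀ y : ℝ, 0 ≤ y → HasDerivAt φ
      ((uinf - u y) * (u y - uinf) + (v y - vinf) * (σ vinf - σ (v y))) y := by
    intro y hy
    exact ((hv y hy).sub_const _).mul ((hu y hy).sub_const _)
  have hφanti : AntitoneOn φ (Set.Ici 0) := by
    apply antitoneOn_of_deriv_nonpos (convex_Ici 0)
    · intro x hx
      exact ((hφ' x hx).continuousAt).continuousWithinAt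
    · intro x hx
      rw [interior_Ici] at hx
      exact ((hφ' x (le_of_lt hx)).differentiableAt).differentiableWithinAt
    · intro x hx
      rw [interior_Ici] at hx
      rw [(hφ' x (le_of_lt hx)).deriv]
      have h1 : (uinf - u x) * (u x - uinf) ≤ 0 := by nlinarith [sq_nonneg (u x - uinf)]
      have h2 : (v x - vinf) * (σ vinf - σ (v x)) ≤ 0 := by
        rcases lt_trichotomy (v x) vinf with h | h | h
        · have := hσmono h
          nlinarith
        · simp [h]
        · have := hσmono h
          nlinarith
      linarith
  have hφlim : Tendsto φ atTop (nhds 0) := by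
    have h1 : Tendsto (fun y => v y - vinf) atTop (nhds (vinf - vinf)) :=
      hvlim.sub tendsto_const_nhds
    have h2 : Tendsto (fun y => u y - uinf) atTop (nhds (uinf - uinf)) :=
      hulim.sub tendsto_const_nhds
    have h3 := h1.mul h2
    simpa using h3
  have hφ0 : 0 ≤ φ 0 := by
    apply le_of_tendsto hφlim
    filter_upwards [eventually_ge_atTop (0 : ℝ)] with y hy
    exact hφanti Set.self_mem_Ici hy hy
  -- part 2
  have part2 : v 0 = vinf ↔ u 0 = uinf := by
    constructor
    · intro h
      have : (u 0 - uinf) ^ 2 / 2 = 0 := by rw [key, h, hW0]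
      have : (u 0 - uinf) ^ 2 = 0 := by linarith
      have := pow_eq_zero_iff (n := 2) (by norm_num) |>.mp this
      linarith
    · intro h
      by_contra hne
      have := hWpos (v 0) hne
      rw [← key, h] at this
      simp at this
  -- part 3
  have part3 : v 0 ≠ vinf → 0 < (uinf - u 0) * (vinf - v 0) := by
    intro hne
    have hu0 : u 0 ≠ uinf := fun h => hne (part2.mpr h)
    have hprod : (v 0 - vinf) * (u 0 - uinf) ≠ 0 :=
      mul_ne_zero (sub_ne_zero.2 hne) (sub_ne_zero.2 hu0)
    have : 0 < (v 0 - vinf) * (u 0 - uinf) := lt_of_le_of_ne hφ0 (Ne.symm hprod)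
    nlinarith
  refine ⟨key, part2, part3, ?_, ?_⟩
  · intro h
    have hne : v 0 ≠ vinf := ne_of_lt h
    have h3 := part3 hne
    have huu : u 0 < uinf := by nlinarith
    have h2W : (∫ s in vinf..(v 0), 2 * (σ s - σ vinf)) = (u 0 - uinf) ^ 2 := by
      rw [intervalIntegral.integral_const_mul]
      have hWv : intervalIntegral F vinf (v 0) MeasureTheory.volume = W (v 0) := rfl
      rw [hWv, ← key]
      ring
    rw [h2W, Real.sqrt_sq_eq_abs, abs_of_neg (by linarith : u 0 - uinf < 0)]
    ring
  · intro h
    have hne : v 0 ≠ vinf := ne_of_gt h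
    have h3 := part3 hne
    have huu : uinf < u 0 := by nlinarith
    have h2W : (∫ s in vinf..(v 0), 2 * (σ s - σ vinf)) = (u 0 - uinf) ^ 2 := by
      rw [intervalIntegral.integral_const_mul]
      have hWv : intervalIntegral F vinf (v 0) MeasureTheory.volume = W (v 0) := rfl
      rw [hWv, ← key]
      ring
    rw [h2W, Real.sqrt_sq_eq_abs, abs_of_pos (by linarith : 0 < u 0 - uinf)]
    ring
end

section
/- (Section 4.2: a diagonal viscosity matrix yields the wrong boundary condition for a linear system.) Let M be the 2×2 real matrix with rows (−1, 1) and (−3, 3), and let c ∈ ℝ². If v : [0,∞) → ℝ² is differentiable with v'(y) = M·(v(y) − c) for all y ≥ 0 and v(y) → c as y → ∞, then v(0) = c (indeed v(y) = c for all y ≥ 0). -/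
open Filter Matrix

/-- Auxiliary: a function with right derivative zero on `[0,∞)` is constant there. -/
lemma const_of_deriv_zero_on_nonneg (f : ℝ → ℝ)
    (hf : ∀ x : ℝ, 0 ≤ x → HasDerivAt f 0 x) :
    ∀ y : ℝ, 0 ≤ y → f y = f 0 := by
  intro y hy
  have := constant_of_has_deriv_right_zero (f := f) (a := 0) (b := y)
    (fun x hx => ((hf x hx.1).continuousAt).continuousWithinAt)
    (fun x hx => ((hf x hx.1).hasDerivWithinAt))
  exact this y (Set.mem_Icc.mpr ⟨hy, le_refl y⟩)

/-- Section 4.2: a diagonal viscosity matrix yields the wrong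
boundary condition for a linear system: with `M` the 2×2 matrix with rows
`(−1, 1)` and `(−3, 3)`, any differentiable `v : [0,∞) → ℝ²` with
`v'(y) = M (v(y) − c)` for `y ≥ 0` and `v(y) → c` as `y → ∞` satisfies
`v(0) = c` (indeed `v(y) = c` for all `y ≥ 0`). -/
theorem diagonal_viscosity_forces_full_dirichlet
    (M : Matrix (Fin 2) (Fin 2) ℝ) (hM : M = !![(-1 : ℝ), 1; -3, 3])
    (c : Fin 2 → ℝ) (v : ℝ → Fin 2 → ℝ)
    (hv : ∀ y : ℝ, 0 ≤ y → HasDerivAt v (M.mulVec (v y - c)) y)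
    (hlim : Tendsto v atTop (nhds c)) :
    v 0 = c ∧ ∀ y : ℝ, 0 ≤ y → v y = c := by
  subst hM
  -- component derivatives
  have hv0 : ∀ y : ℝ, 0 ≤ y →
      HasDerivAt (fun y => v y 0) (-(v y 0 - c 0) + (v y 1 - c 1)) y := by
    intro y hy
    have h := (hasDerivAt_pi.mp (hv y hy)) 0
    exact h.congr_deriv (by simp [Matrix.mulVec, dotProduct, Fin.sum_univ_two])
  have hv1 : ∀ y : ℝ, 0 ≤ y →
      HasDerivAt (fun y => v y 1) (-3*(v y 0 - c 0) + 3*(v y 1 - c 1)) y := by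
    intro y hy
    have h := (hasDerivAt_pi.mp (hv y hy)) 1
    exact h.congr_deriv (by simp [Matrix.mulVec, dotProduct, Fin.sum_univ_two])
  set a : ℝ → ℝ := fun y => 3*(v y 0 - c 0) - (v y 1 - c 1) with ha_def
  set b : ℝ → ℝ := fun y => (v y 0 - c 0) - (v y 1 - c 1) with hb_def
  -- a has derivative 0 on [0,∞)
  have ha' : ∀ y : ℝ, 0 ≤ y → HasDerivAt a 0 y := by
    intro y hy
    have := (((hv0 y hy).sub_const (c 0)).const_mul 3).sub
      ((hv1 y hy).sub_const (c 1))
    exact this.congr_deriv (by ring)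
  -- b has derivative 2*b
  have hb' : ∀ y : ℝ, 0 ≤ y → HasDerivAt b (2 * b y) y := by
    intro y hy
    have := ((hv0 y hy).sub_const (c 0)).sub ((hv1 y hy).sub_const (c 1))
    exact this.congr_deriv (by simp only [hb_def]; ring)
  -- a is constant on [0,∞)
  have ha_const := const_of_deriv_zero_on_nonneg a ha'
  -- h := b * exp(-2y) is constant on [0,∞)
  set g : ℝ → ℝ := fun y => b y * Real.exp (-(2*y)) with hg_def
  have hg' : ∀ y : ℝ, 0 ≤ y → HasDerivAt g 0 y := by
    intro y hy
    have hexp : HasDerivAt (fun y : ℝ => Real.exp (-(2*y)))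
        (Real.exp (-(2*y)) * (-2)) y := by
      have : HasDerivAt (fun y : ℝ => -(2*y)) (-2) y := by
        exact ((hasDerivAt_id y).const_mul (2:ℝ)).neg.congr_deriv (by norm_num)
      exact this.exp
    have := (hb' y hy).mul hexp
    exact this.congr_deriv (by ring)
  have hg_const := const_of_deriv_zero_on_nonneg g hg'
  -- component limits
  have hlim0 : Tendsto (fun y => v y 0) atTop (nhds (c 0)) :=
    tendsto_pi_nhds.mp hlim 0
  have hlim1 : Tendsto (fun y => v y 1) atTop (nhds (c 1)) :=
    tendsto_pi_nhds.mp hlim 1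
  have hlima : Tendsto a atTop (nhds 0) := by
    have := (((hlim0.sub_const (c 0)).const_mul 3).sub (hlim1.sub_const (c 1)))
    simpa using this
  have hlimb : Tendsto b atTop (nhds 0) := by
    have := ((hlim0.sub_const (c 0)).sub (hlim1.sub_const (c 1)))
    simpa using this
  -- a 0 = 0
  have ha0 : a 0 = 0 := by
    have heq : (fun _ : ℝ => a 0) =ᶠ[atTop] a := by
      filter_upwards [eventually_ge_atTop (0:ℝ)] with y hy
      exact (ha_const y hy).symm
    exact tendsto_nhds_unique (tendsto_const_nhds.congr' heq) hlima
  -- g 0 = 0, i.e. b 0 = 0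
  have hlimg : Tendsto g atTop (nhds 0) := by
    have h2y : Tendsto (fun y : ℝ => 2*y) atTop atTop :=
      tendsto_id.const_mul_atTop two_pos
    have hexp : Tendsto (fun y : ℝ => Real.exp (-(2*y))) atTop (nhds 0) :=
      Real.tendsto_exp_neg_atTop_nhds_zero.comp h2y
    simpa using hlimb.mul hexp
  have hg0 : g 0 = 0 := by
    have heq : (fun _ : ℝ => g 0) =ᶠ[atTop] g := by
      filter_upwards [eventually_ge_atTop (0:ℝ)] with y hy
      exact (hg_const y hy).symm
    exact tendsto_nhds_unique (tendsto_const_nhds.congr' heq) hlimg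
  -- hence b y = 0 for y ≥ 0
  have hb0 : ∀ y : ℝ, 0 ≤ y → b y = 0 := by
    intro y hy
    have := hg_const y hy
    rw [hg0] at this
    have hexp := Real.exp_ne_zero (-(2*y))
    have : b y * Real.exp (-(2*y)) = 0 := this
    exact (mul_eq_zero.mp this).resolve_right hexp
  have key : ∀ y : ℝ, 0 ≤ y → v y = c := by
    intro y hy
    have h1 : a y = 0 := (ha_const y hy).trans ha0
    have h2 : b y = 0 := hb0 y hy
    simp only [ha_def, hb_def] at h1 h2
    funext i
    fin_cases i <;> [skip; skip] <;> simp <;> linarith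
  exact ⟨key 0 le_rfl, key⟩
end
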